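/- Let n ≥ 2 and let a_1, …, a_n be real numbers. The diagonal partial n×n matrix diag(a_1, …, a_n) is completable to a rank-one matrix in the standard simplex Δ^{nn−1} if and only if a_i ≥ 0 for all i = 1, …, n and ∑_{i=1}^n √(a_i) ≤ 1. -/

import Mathlib

open Matrix Finset

lemma rank_vecMulVec_eq_one {n : ℕ} (x y : Fin n → ℝ) (hx : x ≠ 0) (hy : y ≠ 0) :
    (Matrix.vecMulVec x y).rank = 1 := by
  have h1 : (Matrix.vecMulVec x y).rank ≤ 1 := by
    rw [Matrix.vecMulVec_eq (Fin 1)]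
    exact (Matrix.rank_mul_le_left _ _).trans
      ((Matrix.rank_le_card_width _).trans (by simp))
  have h0 : Matrix.vecMulVec x y ≠ 0 := by
    obtain ⟨i, hi⟩ := Function.ne_iff.1 hx
    obtain ⟨j, hj⟩ := Function.ne_iff.1 hy
    intro h
    apply mul_ne_zero hi hj
    have := congrFun (congrFun h i) j
    simpa [Matrix.vecMulVec_apply] using this
  have h2 : (Matrix.vecMulVec x y).rank ≠ 0 := by
    intro h
    apply h0
    rw [Matrix.rank, Submodule.finrank_eq_zero, LinearMap.range_eq_bot] at h
    ext i j
    have := congrFun (LinearMap.congr_fun h (Pi.single j 1)) i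
    simpa [Matrix.mulVecLin_apply] using this
  omega

lemma minor_vanish {n : ℕ} (M : Matrix (Fin n) (Fin n) ℝ) (h : M.rank = 1) :
    ∀ i j, M i i * M j j = M i j * M j i := by
  set W := LinearMap.range M.mulVecLin with hW
  have hfr : Module.finrank ℝ W ≤ 1 := le_of_eq h
  obtain ⟨v, hv⟩ := finrank_le_one_iff.mp hfr
  have hcol : ∀ j : Fin n, ∃ c : ℝ, ∀ i, M i j = c * (v : Fin n → ℝ) i := by
    intro j
    have hmem : (fun i => M i j) ∈ W := by
      refine ⟨Pi.single j 1, ?_⟩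
      simp [Matrix.mulVecLin_apply]; rfl
    obtain ⟨c, hc⟩ := hv ⟨_, hmem⟩
    refine ⟨c, fun i => ?_⟩
    have := congrFun (congrArg (Subtype.val) hc) i
    simpa using this.symm
  intro i j
  obtain ⟨ci, hci⟩ := hcol i
  obtain ⟨cj, hcj⟩ := hcol j
  rw [hci i, hci j, hcj i, hcj j]; ring

theorem diagonal_completable_iff_nonneg (n : ℕ) (hn : 2 ≤ n) (a : Fin n → ℝ) :
    (∃ M : Matrix (Fin n) (Fin n) ℝ,
      (∀ i j, 0 ≤ M i j) ∧ (∑ i, ∑ j, M i j = 1) ∧ M.rank = 1 ∧ ∀ i, M i i = a i) ↔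
    ((∀ i, 0 ≤ a i) ∧ ∑ i, Real.sqrt (a i) ≤ 1) := by
  set i0 : Fin n := ⟨0, by omega⟩ with hi0def
  set i1 : Fin n := ⟨1, by omega⟩ with hi1def
  have hne01 : i0 ≠ i1 := by
    rw [hi0def, hi1def]
    intro h
    exact absurd (congrArg Fin.val h) (by norm_num)
  constructor
  · rintro ⟨M, hpos, hsum, hrank, hdiag⟩
    have key := minor_vanish M hrank
    have hnn : ∀ i, 0 ≤ a i := fun i => (hdiag i) ▸ hpos i i
    refine ⟨hnn, ?_⟩
    have hs0 : 0 ≤ ∑ i, Real.sqrt (a i) :=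
      Finset.sum_nonneg fun i _ => Real.sqrt_nonneg _
    have hsq : (∑ i, Real.sqrt (a i)) ^ 2 ≤ 1 := by
      have step : ∀ i j : Fin n,
          Real.sqrt (a i) * Real.sqrt (a j) ≤ (M i j + M j i) / 2 := by
        intro i j
        have h1 : Real.sqrt (a i) * Real.sqrt (a j)
            = Real.sqrt (M i j) * Real.sqrt (M j i) := by
          rw [← Real.sqrt_mul (hnn i), ← hdiag i, ← hdiag j, key i j,
            Real.sqrt_mul (hpos i j)]
        rw [h1]
        nlinarith [sq_nonneg (Real.sqrt (M i j) - Real.sqrt (M j i)),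
          Real.sq_sqrt (hpos i j), Real.sq_sqrt (hpos j i)]
      calc (∑ i, Real.sqrt (a i)) ^ 2
          = ∑ i, ∑ j, Real.sqrt (a i) * Real.sqrt (a j) := by
            rw [sq, Finset.sum_mul_sum]
        _ ≤ ∑ i, ∑ j, (M i j + M j i) / 2 :=
            Finset.sum_le_sum fun i _ => Finset.sum_le_sum fun j _ => step i j
        _ = 1 := by
            have h2 : ∑ i : Fin n, ∑ j : Fin n, M j i = 1 := by
              rw [Finset.sum_comm]; exact hsum
            simp only [← Finset.sum_div, Finset.sum_add_distrib]
            rw [hsum, h2]; norm_num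
    nlinarith
  · rintro ⟨hnn, hle⟩
    set s := ∑ i, Real.sqrt (a i) with hs
    have hsnn : 0 ≤ s := Finset.sum_nonneg fun i _ => Real.sqrt_nonneg _
    rcases eq_or_lt_of_le hsnn with hze | hpos
    · -- all a i = 0
      have ha0 : ∀ i, a i = 0 := by
        intro i
        have h := (Finset.sum_eq_zero_iff_of_nonneg
          (fun i _ => Real.sqrt_nonneg (a i))).mp hze.symm i (Finset.mem_univ i)
        have := (Real.sqrt_eq_zero (hnn i)).mp h
        exact this
      have hne : i0 ≠ i1 := hne01
      refine ⟨Matrix.vecMulVec (Pi.single i0 1) (Pi.single i1 1), ?_, ?_, ?_, ?_⟩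
      · intro i j
        rw [Matrix.vecMulVec_apply]
        apply mul_nonneg <;> (rw [Pi.single_apply]; split_ifs <;> norm_num)
      · rw [show (∑ i, ∑ j, Matrix.vecMulVec (Pi.single i0 (1:ℝ)) (Pi.single i1 1) i j)
            = (∑ i, Pi.single i0 (1:ℝ) i) * (∑ j, Pi.single i1 (1:ℝ) j) from by
            rw [Finset.sum_mul_sum]; rfl]
        simp [Pi.single_apply, Finset.sum_ite_eq']
      · refine rank_vecMulVec_eq_one _ _ ?_ ?_
        · intro h
          have := congrFun h i0
          simp [Pi.single_apply] at this
        · intro h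
          have := congrFun h i1
          simp [Pi.single_apply] at this
      · intro i
        rw [Matrix.vecMulVec_apply, ha0 i, Pi.single_apply, Pi.single_apply]
        split_ifs with h1 h2
        · exact absurd (h1 ▸ h2 : i0 = i1) hne
        · ring
        all_goals ring
    · by_cases hex : ∃ k, a k = 0
      · -- some zero diagonal entry; dump slack there
        obtain ⟨k, hk⟩ := hex
        set c := (1 - s ^ 2) / s with hc
        have hcnn : 0 ≤ c := div_nonneg (by nlinarith) hpos.le
        set x : Fin n → ℝ := fun i => Real.sqrt (a i) + (if i = k then c else 0)
          with hxdef
        set y : Fin n → ℝ := fun i => Real.sqrt (a i) with hydef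
        have hsx : ∑ i, x i = s + c := by
          rw [hxdef]; rw [Finset.sum_add_distrib]
          simp [Finset.sum_ite_eq', hs]; rfl
        have hsy : ∑ i, y i = s := by rw [hydef, hs]
        have hsum_ne : (∑ i, Real.sqrt (a i)) ≠ 0 := by rw [← hs]; exact hpos.ne'
        obtain ⟨i₂, -, hi₂⟩ := Finset.exists_ne_zero_of_sum_ne_zero hsum_ne
        refine ⟨Matrix.vecMulVec x y, ?_, ?_, ?_, ?_⟩
        · intro i j
          rw [Matrix.vecMulVec_apply]
          apply mul_nonneg
          · rw [hxdef]; dsimp only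
            split_ifs <;> [positivity; positivity]
          · exact Real.sqrt_nonneg _
        · rw [show (∑ i, ∑ j, Matrix.vecMulVec x y i j) = (∑ i, x i) * (∑ j, y j) by
            rw [Finset.sum_mul_sum]; rfl]
          rw [hsx, hsy, hc]
          field_simp
          ring
        · refine rank_vecMulVec_eq_one _ _ ?_ ?_
          · intro h
            have := congrFun h i₂
            rw [hxdef] at this; dsimp only at this
            have h2 : (0:ℝ) ≤ if i₂ = k then c else 0 := by split_ifs <;> simp [hcnn]
            have h3 := Real.sqrt_nonneg (a i₂)
            simp only [Pi.zero_apply] at this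
            nlinarith [lt_of_le_of_ne h3 (Ne.symm hi₂)]
          · intro h
            exact hi₂ (congrFun h i₂)
        · intro i
          rw [Matrix.vecMulVec_apply, hxdef, hydef]; dsimp only
          by_cases h : i = k
          · subst h
            simp [hk]
          · simp only [h, if_false, add_zero]
            exact Real.mul_self_sqrt (hnn i)
      · -- all diagonal entries positive
        push_neg at hex
        have hpa : ∀ i, 0 < a i := fun i => lt_of_le_of_ne (hnn i) (Ne.symm (hex i))
        set b := Real.sqrt (a i0) with hb
        have hbpos : 0 < b := Real.sqrt_pos.mpr (hpa i0)
        have hb2 : b ^ 2 = a i0 := Real.sq_sqrt (hnn i0)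
        have hne : i1 ≠ i0 := Ne.symm hne01
        have hr : Real.sqrt (a i1) ≤ s - b := by
          have h1 : s = b + ∑ i ∈ Finset.univ.erase i0, Real.sqrt (a i) := by
            rw [hs, hb, ← Finset.add_sum_erase _ _ (Finset.mem_univ i0)]
          have h2 : Real.sqrt (a i1) ≤ ∑ i ∈ Finset.univ.erase i0, Real.sqrt (a i) :=
            Finset.single_le_sum (fun i _ => Real.sqrt_nonneg (a i))
              (Finset.mem_erase.mpr ⟨hne, Finset.mem_univ i1⟩)
          linarith
        have hrpos : 0 < s - b := lt_of_lt_of_le (Real.sqrt_pos.mpr (hpa i1)) hr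
        set K := (1 - a i0 - (s - b) ^ 2) / ((s - b) * b) with hK
        have hK2 : 2 ≤ K := by
          rw [hK, le_div_iff₀ (by positivity)]
          nlinarith [hle]
        have hKrb : K * ((s - b) * b) = 1 - a i0 - (s - b) ^ 2 := by
          rw [hK]; field_simp
        set D := Real.sqrt (K ^ 2 - 4) with hD
        have hDnn : 0 ≤ D := Real.sqrt_nonneg _
        have hD2 : D ^ 2 = K ^ 2 - 4 := Real.sq_sqrt (by nlinarith)
        have hDK : D ≤ K := by nlinarith
        set lam := (K + D) / 2 with hlam
        set mu := (K - D) / 2 with hmu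
        have hlm : lam * mu = 1 := by rw [hlam, hmu]; linear_combination (-(1:ℝ)/4) * hD2
        have hlmK : lam + mu = K := by rw [hlam, hmu]; ring
        have hlam1 : 1 ≤ lam := by rw [hlam]; linarith
        have hmunn : 0 ≤ mu := by rw [hmu]; linarith
        set x : Fin n → ℝ := fun i => Real.sqrt (a i) + (if i = i0 then (lam - 1) * b else 0)
          with hxdef
        set y : Fin n → ℝ := fun i => Real.sqrt (a i) + (if i = i0 then (mu - 1) * b else 0)
          with hydef
        have hsx : ∑ i, x i = s + (lam - 1) * b := by
          rw [hxdef, Finset.sum_add_distrib]; simp [Finset.sum_ite_eq', hs]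
        have hsy : ∑ i, y i = s + (mu - 1) * b := by
          rw [hydef, Finset.sum_add_distrib]; simp [Finset.sum_ite_eq', hs]
        have hxnn : ∀ i, 0 ≤ x i := by
          intro i; rw [hxdef]; dsimp only
          by_cases h : i = i0
          · subst h; rw [if_pos rfl, ← hb]; nlinarith
          · rw [if_neg h, add_zero]; exact Real.sqrt_nonneg _
        have hynn : ∀ i, 0 ≤ y i := by
          intro i; rw [hydef]; dsimp only
          by_cases h : i = i0
          · subst h; rw [if_pos rfl, ← hb]; nlinarith
          · rw [if_neg h, add_zero]; exact Real.sqrt_nonneg _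
        refine ⟨Matrix.vecMulVec x y, ?_, ?_, ?_, ?_⟩
        · intro i j
          rw [Matrix.vecMulVec_apply]
          exact mul_nonneg (hxnn i) (hynn j)
        · rw [show (∑ i, ∑ j, Matrix.vecMulVec x y i j) = (∑ i, x i) * (∑ j, y j) by
            rw [Finset.sum_mul_sum]; rfl]
          rw [hsx, hsy]
          linear_combination ((s - b) * b) * hlmK + hKrb + b ^ 2 * hlm + hb2
        · refine rank_vecMulVec_eq_one _ _ ?_ ?_
          · intro h
            have := congrFun h i1
            rw [hxdef] at this; dsimp only at this
            rw [if_neg hne, add_zero] at this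
            exact (Real.sqrt_pos.mpr (hpa i1)).ne' (by simpa using this)
          · intro h
            have := congrFun h i1
            rw [hydef] at this; dsimp only at this
            rw [if_neg hne, add_zero] at this
            exact (Real.sqrt_pos.mpr (hpa i1)).ne' (by simpa using this)
        · intro i
          rw [Matrix.vecMulVec_apply, hxdef, hydef]; dsimp only
          by_cases h : i = i0
          · subst h
            rw [if_pos rfl, if_pos rfl, ← hb]
            linear_combination b ^ 2 * hlm + hb2
          · rw [if_neg h, if_neg h, add_zero]
            exact Real.mul_self_sqrt (hnn i)
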